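/- Let K ⊆ ℝⁿ be a nonempty closed convex set, a ∈ K, and v ∈ ℝⁿ. Then the one-sided limit lim_{δ→0⁺}(Ψ_K(a + δv) − a)/δ exists; that is, there is a (unique) w ∈ ℝⁿ such that (Ψ_K(a + δv) − a)/δ → w as δ → 0⁺, so that the vector field projection Π_K[a,v] is well defined. -/

import Mathlib

open Filter Set InnerProductSpace

set_option maxHeartbeats 1000000

/-- Metric projection onto a set: the nearest point of `K` to `y`
(well defined when `K` is nonempty, closed and convex). -/
noncomputable def metricProj {E : Type*} [NormedAddCommGroup E] [InnerProductSpace ℝ E]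
    (K : Set E) (y : E) : E :=
  Classical.epsilon fun p => p ∈ K ∧ ∀ z ∈ K, ‖y - p‖ ≤ ‖y - z‖

/-- **Existence of the vector field projection.** For a nonempty closed convex `K ⊆ ℝⁿ`,
`a ∈ K` and `v ∈ ℝⁿ`, the one-sided limit `Π_K[a,v] = lim_{δ→0⁺} (Ψ_K(a + δ v) - a)/δ`
exists, i.e. there is `w` such that `(Ψ_K(a + δ v) - a)/δ → w` as `δ → 0⁺`. -/
theorem vfProj_exists
    {n : ℕ} (K : Set (EuclideanSpace ℝ (Fin n)))
    (hKne : K.Nonempty) (hKcl : IsClosed K) (hKcv : Convex ℝ K)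
    (a : EuclideanSpace ℝ (Fin n)) (ha : a ∈ K) (v : EuclideanSpace ℝ (Fin n)) :
    ∃ w : EuclideanSpace ℝ (Fin n),
      Tendsto (fun δ : ℝ => δ⁻¹ • (metricProj K (a + δ • v) - a))
        (nhdsWithin 0 (Set.Ioi 0)) (nhds w) := by
  classical
  haveI : Nonempty K := hKne.to_subtype
  -- the metric projection satisfies its defining property
  have hspec : ∀ y : EuclideanSpace ℝ (Fin n),
      metricProj K y ∈ K ∧ ∀ z ∈ K, ‖y - metricProj K y‖ ≤ ‖y - z‖ := by
    intro y
    apply Classical.epsilon_spec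
      (p := fun p => p ∈ K ∧ ∀ z ∈ K, ‖y - p‖ ≤ ‖y - z‖)
    obtain ⟨p, hp, hmin⟩ :=
      exists_norm_eq_iInf_of_complete_convex hKne hKcl.isComplete hKcv y
    refine ⟨p, hp, fun z hz => ?_⟩
    rw [hmin]
    have hb : BddBelow (Set.range fun w : K => ‖y - (w : EuclideanSpace ℝ (Fin n))‖) :=
      ⟨0, by rintro x ⟨w, rfl⟩; exact norm_nonneg _⟩
    exact ciInf_le hb ⟨z, hz⟩
  set P : ℝ → EuclideanSpace ℝ (Fin n) := fun δ => metricProj K (a + δ • v) with hP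
  have hPmem : ∀ δ, P δ ∈ K := fun δ => (hspec _).1
  -- variational inequality
  have hinner : ∀ δ : ℝ, ∀ z ∈ K, ⟪(a + δ • v) - P δ, z - P δ⟫_ℝ ≤ 0 := by
    intro δ z hz
    have h := hspec (a + δ • v)
    have hb : BddBelow (Set.range fun w : K => ‖(a + δ • v) - (w : EuclideanSpace ℝ (Fin n))‖) :=
      ⟨0, by rintro x ⟨w, rfl⟩; exact norm_nonneg _⟩
    have heq : ‖(a + δ • v) - P δ‖ = ⨅ w : K, ‖(a + δ • v) - w‖ :=
      le_antisymm (le_ciInf fun w => h.2 w w.2) (ciInf_le hb ⟨P δ, hPmem δ⟩)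
    exact (norm_eq_iInf_iff_real_inner_le_zero hKcv (hPmem δ)).1 heq z hz
  set f : ℝ → EuclideanSpace ℝ (Fin n) := fun δ => δ⁻¹ • (P δ - a) with hf
  set g : ℝ → ℝ := fun δ => ‖v - f δ‖ with hg
  -- rewriting the residual
  have hres : ∀ δ : ℝ, 0 < δ → (a + δ • v) - P δ = δ • (v - f δ) := by
    intro δ hδ
    have : δ • f δ = P δ - a := by
      rw [hf]; rw [smul_smul, mul_inv_cancel₀ hδ.ne', one_smul]
    rw [smul_sub, this]
    abel
  -- for δ ≤ δ', the point a + δ • f δ' belongs to K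
  have hzmem : ∀ δ δ' : ℝ, 0 < δ → δ ≤ δ' → a + δ • f δ' ∈ K := by
    intro δ δ' hδ hle
    have hδ' : 0 < δ' := lt_of_lt_of_le hδ hle
    have hratio : a + δ • f δ' = (1 - δ / δ') • a + (δ / δ') • P δ' := by
      have : δ • f δ' = (δ / δ') • (P δ' - a) := by
        rw [hf, smul_smul, div_eq_mul_inv]
      rw [this, smul_sub, sub_smul, one_smul]
      abel
    rw [hratio]
    have h1 : 0 ≤ δ / δ' := le_of_lt (div_pos hδ hδ')
    have h2 : δ / δ' ≤ 1 := (div_le_one hδ').2 hle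
    exact hKcv ha (hPmem δ') (by linarith) h1 (by ring)
  -- monotonicity of g
  have hmono : ∀ δ δ' : ℝ, 0 < δ → δ ≤ δ' → g δ ≤ g δ' := by
    intro δ δ' hδ hle
    have hδ' : 0 < δ' := lt_of_lt_of_le hδ hle
    have h1 : ‖(a + δ • v) - P δ‖ ≤ ‖(a + δ • v) - (a + δ • f δ')‖ :=
      (hspec (a + δ • v)).2 _ (hzmem δ δ' hδ hle)
    have h2 : (a + δ • v) - (a + δ • f δ') = δ • (v - f δ') := by
      rw [smul_sub]; abel
    rw [hres δ hδ, h2, norm_smul, norm_smul] at h1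
    have := (mul_le_mul_iff_right₀ (show (0:ℝ) < ‖(δ:ℝ)‖ by rw [Real.norm_eq_abs, abs_of_pos hδ]; exact hδ)).1 h1
    exact this
  -- Cauchy estimate
  have hcauchy : ∀ δ δ' : ℝ, 0 < δ → δ ≤ δ' →
      ‖f δ' - f δ‖ ^ 2 ≤ g δ' ^ 2 - g δ ^ 2 := by
    intro δ δ' hδ hle
    have hz := hinner δ _ (hzmem δ δ' hδ hle)
    have hz2 : (a + δ • f δ') - P δ = δ • (f δ' - f δ) := by
      have : δ • f δ = P δ - a := by
        rw [hf, smul_smul, mul_inv_cancel₀ hδ.ne', one_smul]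
      rw [smul_sub, this]; abel
    rw [hres δ hδ, hz2, real_inner_smul_left, real_inner_smul_right] at hz
    have hip : ⟪v - f δ, f δ' - f δ⟫_ℝ ≤ 0 := by
      have hδ2 : 0 < δ * δ := mul_pos hδ hδ
      nlinarith
    have hexp : ‖v - f δ'‖ ^ 2 =
        ‖v - f δ‖ ^ 2 - 2 * ⟪v - f δ, f δ' - f δ⟫_ℝ + ‖f δ' - f δ‖ ^ 2 := by
      have : v - f δ' = (v - f δ) - (f δ' - f δ) := by abel
      rw [this, norm_sub_sq_real]
    have : g δ' ^ 2 = g δ ^ 2 - 2 * ⟪v - f δ, f δ' - f δ⟫_ℝ + ‖f δ' - f δ‖ ^ 2 := hexp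
    nlinarith
  -- the infimum of g² over positive δ
  set S : Set ℝ := (fun δ => g δ ^ 2) '' Ioi 0 with hS
  have hSne : S.Nonempty := ⟨g 1 ^ 2, ⟨1, by norm_num, rfl⟩⟩
  have hSbd : BddBelow S := ⟨0, fun x ⟨δ, _, hx⟩ => hx ▸ sq_nonneg _⟩
  set m : ℝ := sInf S with hm
  -- f is Cauchy along 𝓝[>] 0
  have hNeBot : (nhdsWithin (0:ℝ) (Set.Ioi 0)).NeBot := nhdsGT_neBot 0
  have hCauchy : Cauchy (map f (nhdsWithin (0:ℝ) (Set.Ioi 0))) := by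
    rw [Metric.cauchy_iff]
    refine ⟨map_neBot, fun ε hε => ?_⟩
    obtain ⟨x, ⟨r, hr, hxr⟩, hx⟩ :=
      Real.lt_sInf_add_pos hSne (show (0:ℝ) < ε ^ 2 / 2 by positivity)
    refine ⟨f '' Ioo 0 r, ?_, ?_⟩
    · exact mem_map.2 (mem_of_superset (Ioo_mem_nhdsGT_of_mem ⟨le_refl 0, hr⟩)
        (fun δ hδ => mem_image_of_mem f hδ))
    · rintro x₁ ⟨δ₁, hδ₁, rfl⟩ x₂ ⟨δ₂, hδ₂, rfl⟩
      have key : ∀ s t : ℝ, s ∈ Ioo (0:ℝ) r → t ∈ Ioo (0:ℝ) r → s ≤ t →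
          ‖f t - f s‖ < ε := by
        intro s t hs ht hst
        have h1 : ‖f t - f s‖ ^ 2 ≤ g t ^ 2 - g s ^ 2 := hcauchy s t hs.1 hst
        have h2 : g t ≤ g r := hmono t r ht.1 (le_of_lt ht.2)
        have h3 : m ≤ g s ^ 2 := csInf_le hSbd ⟨s, hs.1, rfl⟩
        have h4 : g t ^ 2 ≤ g r ^ 2 := by
          have := norm_nonneg (v - f t)
          nlinarith
        have hgr : g r ^ 2 < m + ε ^ 2 / 2 := by
          have hx' : g r ^ 2 = x := hxr
          rw [hx', hm]; exact hx
        have h5 : ‖f t - f s‖ ^ 2 < ε ^ 2 := by nlinarith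
        exact lt_of_pow_lt_pow_left₀ 2 (le_of_lt hε) h5
      rcases le_total δ₁ δ₂ with h | h
      · rw [dist_eq_norm, ← norm_neg, neg_sub]
        exact key δ₁ δ₂ hδ₁ hδ₂ h
      · rw [dist_eq_norm]
        exact key δ₂ δ₁ hδ₂ hδ₁ h
  obtain ⟨w, hw⟩ := CompleteSpace.complete hCauchy
  exact ⟨w, hw⟩
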